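/- Let G be a matching-covered graph with tight cut C, contractions G₁, G₂ with incidence matrices A₁, A₂, and incidence matrix A. Suppose A₁y = 1 and A₂t = 1. For each e ∈ C, index the matchings of G₁ containing e by I^e with coefficients y_i and matchings of G₂ containing e by J^e with coefficients t_j. Define x on the matchings K^e_{ij} = M^e_i ∪ N^e_j of G by x^e_{ij} = y^e_i · t^e_j (and 0 on all other matchings). Then Ax = 1. -/

import Mathlib

open Finset
open scoped Classical

/-- A multigraph: a type of vertices, a type of edges (parallel edges allowed),
and an assignment of an unordered pair of endpoints to each edge. -/
structure Multigraph (V E : Type) where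
  ends : E → Sym2 V

namespace Multigraph

variable {V E : Type} [Fintype V] [Fintype E] (G : Multigraph V E)

/-- The edge `e` is incident with the vertex `v`. -/
def Inc (e : E) (v : V) : Prop := v ∈ G.ends e

/-- The graph has no loops. -/
def Loopless : Prop := ∀ e : E, ¬ (G.ends e).IsDiag

/-- The degree of a vertex: the number of edges incident with it. -/
noncomputable def degree (v : V) : ℕ := (univ.filter fun e => G.Inc e v).card

/-- A perfect matching: a set of edges covering every vertex exactly once. -/
def IsPM (M : Finset E) : Prop := ∀ v : V, (M.filter fun e => G.Inc e v).card = 1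

/-- The cut determined by a shore `S`: all edges with exactly one endpoint in `S`. -/
noncomputable def cut (S : Finset V) : Finset E :=
  univ.filter fun e => ∃ u v : V, G.ends e = s(u, v) ∧ u ∈ S ∧ v ∉ S

/-- `S` is the shore of an odd cut. -/
def IsOddShore (_G : Multigraph V E) (S : Finset V) : Prop := Odd S.card ∧ Odd Sᶜ.card

/-- `S` is the shore of a tight cut: an odd cut meeting every perfect matching
in exactly one edge. -/
def IsTightShore (S : Finset V) : Prop :=
  G.IsOddShore S ∧ ∀ M : Finset E, G.IsPM M → (M ∩ G.cut S).card = 1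

/-- The underlying simple graph of a multigraph. -/
def adj : SimpleGraph V := SimpleGraph.fromRel (fun u v => ∃ e : E, G.ends e = s(u, v))

/-- A matching-covered graph: connected, with at least one edge, and every
edge lies in some perfect matching. -/
def MatchingCovered : Prop :=
  G.adj.Connected ∧ Nonempty E ∧ ∀ e : E, ∃ M : Finset E, G.IsPM M ∧ e ∈ M

/-- `G` is an `r`-graph: `r`-regular, loopless, and every odd cut has at least `r` edges. -/
def IsRGraph (r : ℕ) : Prop :=
  G.Loopless ∧ (∀ v : V, G.degree v = r) ∧
    ∀ S : Finset V, G.IsOddShore S → r ≤ (G.cut S).card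

end Multigraph

namespace Multigraph
variable {V E : Type} [Fintype V] [Fintype E] (G : Multigraph V E)

/-- A perfect matching of the contraction of `G` obtained by contracting the
shore `Sᶜ` (so the vertices of the contraction are `S` plus one contracted
vertex), viewed as a set of edges of `G`: every edge has an endpoint in `S`,
every vertex of `S` is covered exactly once, and exactly one edge crosses the
cut (covering the contracted vertex). -/
noncomputable def IsContractionPM (S : Finset V) (M : Finset E) : Prop :=
  (∀ e ∈ M, ∃ v ∈ S, G.Inc e v) ∧
  (∀ v ∈ S, (M.filter fun e => G.Inc e v).card = 1) ∧
  (M ∩ G.cut S).card = 1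

end Multigraph


namespace Multigraph
variable {V E : Type} [Fintype V] [Fintype E] (G : Multigraph V E)

lemma mem_cut_iff (S : Finset V) (e : E) :
    e ∈ G.cut S ↔ (∃ v ∈ S, G.Inc e v) ∧ (∃ v ∈ Sᶜ, G.Inc e v) := by
  simp only [cut, mem_filter, mem_univ, true_and]
  constructor
  · rintro ⟨u, v, h, hu, hv⟩
    exact ⟨⟨u, hu, by simp [Inc, h]⟩, ⟨v, by simpa using hv, by simp [Inc, h]⟩⟩
  · rintro ⟨⟨u, hu, hiu⟩, ⟨v, hv, hiv⟩⟩
    have huv : u ≠ v := by rintro rfl; exact (mem_compl.mp hv) hu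
    have : G.ends e = s(u, v) := ((Sym2.mem_and_mem_iff huv).mp ⟨hiu, hiv⟩)
    exact ⟨u, v, this, hu, by simpa using hv⟩

lemma cut_compl (S : Finset V) : G.cut Sᶜ = G.cut S := by
  ext e
  simp only [mem_cut_iff, compl_compl]
  tauto

/-- Every edge has an endpoint in `S` or in `Sᶜ`. -/
lemma endpoint_side (S : Finset V) (e : E) :
    (∃ v ∈ S, G.Inc e v) ∨ (∃ v ∈ Sᶜ, G.Inc e v) := by
  obtain ⟨u, v, h⟩ : ∃ u v, G.ends e = s(u, v) := ⟨(G.ends e).out.1, (G.ends e).out.2, (Quot.out_eq _).symm⟩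
  by_cases hu : u ∈ S
  · exact Or.inl ⟨u, hu, by simp [Inc, h]⟩
  · exact Or.inr ⟨u, by simpa using hu, by simp [Inc, h]⟩

/-- Decomposition of a perfect matching along a tight cut. -/
lemma decompPM (S : Finset V) (hS : G.IsTightShore S) {K : Finset E} (hK : G.IsPM K) :
    G.IsContractionPM S (K.filter fun f => ∃ v ∈ S, G.Inc f v) ∧
    G.IsContractionPM Sᶜ (K.filter fun f => ∃ v ∈ Sᶜ, G.Inc f v) ∧
    (K.filter fun f => ∃ v ∈ S, G.Inc f v) ∪ (K.filter fun f => ∃ v ∈ Sᶜ, G.Inc f v) = K ∧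
    (K.filter fun f => ∃ v ∈ S, G.Inc f v) ∩ G.cut S =
      (K.filter fun f => ∃ v ∈ Sᶜ, G.Inc f v) ∩ G.cut S := by
  have hfilter : ∀ (T : Finset V), (K.filter fun f => ∃ v ∈ T, G.Inc f v) ∩ G.cut T
      = K ∩ G.cut T := by
    intro T
    ext f
    simp only [mem_inter, mem_filter, mem_cut_iff]
    tauto
  have hvert : ∀ (T : Finset V), ∀ v ∈ T,
      (((K.filter fun f => ∃ v ∈ T, G.Inc f v)).filter fun e => G.Inc e v).card = 1 := by
    intro T v hv
    have : ((K.filter fun f => ∃ v ∈ T, G.Inc f v).filter fun f => G.Inc f v)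
        = K.filter fun f => G.Inc f v := by
      ext f
      simp only [mem_filter]
      exact ⟨fun h => ⟨h.1.1, h.2⟩, fun h => ⟨⟨h.1, v, hv, h.2⟩, h.2⟩⟩
    rw [this]; exact hK v
  refine ⟨⟨fun f hf => (mem_filter.mp hf).2, hvert S, ?_⟩,
      ⟨fun f hf => (mem_filter.mp hf).2, hvert Sᶜ, ?_⟩, ?_, ?_⟩
  · rw [hfilter S]; exact hS.2 K hK
  · rw [hfilter Sᶜ, cut_compl]; exact hS.2 K hK
  · ext f
    simp only [mem_union, mem_filter]
    constructor
    · rintro (h | h) <;> exact h.1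
    · intro hf
      rcases G.endpoint_side S f with h | h
      · exact Or.inl ⟨hf, h⟩
      · exact Or.inr ⟨hf, h⟩
  · rw [hfilter S, ← cut_compl (G := G) S, hfilter Sᶜ, cut_compl]

/-- Composition: compatible contraction matchings glue to a perfect matching. -/
lemma composePM (S : Finset V) {M N : Finset E}
    (hM : G.IsContractionPM S M) (hN : G.IsContractionPM Sᶜ N)
    (hcompat : M ∩ G.cut S = N ∩ G.cut S) :
    G.IsPM (M ∪ N) ∧
    ((M ∪ N).filter fun f => ∃ v ∈ S, G.Inc f v) = M ∧
    ((M ∪ N).filter fun f => ∃ v ∈ Sᶜ, G.Inc f v) = N := by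
  -- an edge of N with an endpoint in S is in the cut, hence in M
  have hNS : ∀ f ∈ N, (∃ v ∈ S, G.Inc f v) → f ∈ M := by
    intro f hf hv
    have hfc : f ∈ G.cut S := (G.mem_cut_iff S f).mpr ⟨hv, hN.1 f hf⟩
    have : f ∈ N ∩ G.cut S := mem_inter.mpr ⟨hf, hfc⟩
    rw [← hcompat] at this
    exact (mem_inter.mp this).1
  have hMS : ∀ f ∈ M, (∃ v ∈ Sᶜ, G.Inc f v) → f ∈ N := by
    intro f hf hv
    have hfc : f ∈ G.cut S := (G.mem_cut_iff S f).mpr ⟨hM.1 f hf, hv⟩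
    have : f ∈ M ∩ G.cut S := mem_inter.mpr ⟨hf, hfc⟩
    rw [hcompat] at this
    exact (mem_inter.mp this).1
  refine ⟨fun v => ?_, ?_, ?_⟩
  · by_cases hv : v ∈ S
    · have : ((M ∪ N).filter fun e => G.Inc e v) = M.filter fun e => G.Inc e v := by
        ext f
        simp only [mem_filter, mem_union]
        constructor
        · rintro ⟨h | h, hi⟩
          · exact ⟨h, hi⟩
          · exact ⟨hNS f h ⟨v, hv, hi⟩, hi⟩
        · exact fun h => ⟨Or.inl h.1, h.2⟩
      rw [this]; exact hM.2.1 v hv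
    · have hv' : v ∈ Sᶜ := mem_compl.mpr hv
      have : ((M ∪ N).filter fun e => G.Inc e v) = N.filter fun e => G.Inc e v := by
        ext f
        simp only [mem_filter, mem_union]
        constructor
        · rintro ⟨h | h, hi⟩
          · exact ⟨hMS f h ⟨v, hv', hi⟩, hi⟩
          · exact ⟨h, hi⟩
        · exact fun h => ⟨Or.inr h.1, h.2⟩
      rw [this]; exact hN.2.1 v hv'
  · ext f
    simp only [mem_filter, mem_union]
    constructor
    · rintro ⟨h | h, hv⟩
      · exact h
      · exact hNS f h hv
    · exact fun h => ⟨Or.inl h, hM.1 f h⟩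
  · ext f
    simp only [mem_filter, mem_union]
    constructor
    · rintro ⟨h | h, hv⟩
      · exact hMS f h hv
      · exact h
    · exact fun h => ⟨Or.inr h, hN.1 f h⟩
end Multigraph

open Multigraph in
/-- given solutions `y`, `t` of the systems `A₁y = 1`, `A₂t = 1`
for the two tight-cut contractions of `G`, assigning to the perfect matching
`K = M ∪ N` of `G` (with `M`, `N` the restrictions of `K` to the two
contractions) the coefficient `y(M)·t(N)` yields a solution of `Ax = 1`. -/
theorem product_combination_solves {V E : Type} [Fintype V] [Fintype E]
    (G : Multigraph V E) (hmc : G.MatchingCovered)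
    (S : Finset V) (hS : G.IsTightShore S)
    (y t : Finset E → ℝ)
    (hy : ∀ e : E, (∃ v ∈ S, G.Inc e v) →
      ∑ M ∈ univ.filter (G.IsContractionPM S), (if e ∈ M then y M else 0) = 1)
    (ht : ∀ e : E, (∃ v ∈ Sᶜ, G.Inc e v) →
      ∑ N ∈ univ.filter (G.IsContractionPM Sᶜ), (if e ∈ N then t N else 0) = 1) :
    ∀ e : E,
      ∑ K ∈ univ.filter G.IsPM,
        (if e ∈ K then
          y (K.filter fun f => ∃ v ∈ S, G.Inc f v) *
          t (K.filter fun f => ∃ v ∈ Sᶜ, G.Inc f v)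
        else 0) = 1 := by
  classical
  intro e
  set C := G.cut S with hC
  set A := univ.filter (G.IsContractionPM S) with hA
  set B := univ.filter (G.IsContractionPM Sᶜ) with hB
  -- reindex the sum over perfect matchings by compatible pairs
  have hre : ∑ K ∈ univ.filter G.IsPM,
        (if e ∈ K then
          y (K.filter fun f => ∃ v ∈ S, G.Inc f v) *
          t (K.filter fun f => ∃ v ∈ Sᶜ, G.Inc f v)
        else 0)
      = ∑ p ∈ (A ×ˢ B).filter (fun p => p.1 ∩ C = p.2 ∩ C),
          (if e ∈ p.1 ∪ p.2 then y p.1 * t p.2 else 0) := by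
    refine Finset.sum_nbij'
      (i := fun K => ((K.filter fun f => ∃ v ∈ S, G.Inc f v),
                      (K.filter fun f => ∃ v ∈ Sᶜ, G.Inc f v)))
      (j := fun p => p.1 ∪ p.2) ?_ ?_ ?_ ?_ ?_
    · intro K hK
      have hK' : G.IsPM K := (mem_filter.mp hK).2
      obtain ⟨h1, h2, _, h4⟩ := G.decompPM S hS hK'
      simp only [hA, hB, mem_filter, mem_product, mem_univ, true_and, and_true]
      exact ⟨⟨h1, h2⟩, h4⟩
    · intro p hp
      simp only [hA, hB, mem_filter, mem_product, mem_univ, true_and] at hp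
      obtain ⟨⟨h1, h2⟩, h3⟩ := hp
      exact mem_filter.mpr ⟨mem_univ _, (G.composePM S h1 h2 h3).1⟩
    · intro K hK
      exact (G.decompPM S hS (mem_filter.mp hK).2).2.2.1
    · intro p hp
      simp only [hA, hB, mem_filter, mem_product, mem_univ, true_and] at hp
      obtain ⟨⟨h1, h2⟩, h3⟩ := hp
      obtain ⟨_, hM, hN⟩ := G.composePM S h1 h2 h3
      exact Prod.ext hM hN
    · intro K hK
      have hK' : G.IsPM K := (mem_filter.mp hK).2
      have hU := (G.decompPM S hS hK').2.2.1
      rw [hU]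
  rw [hre, Finset.sum_filter, Finset.sum_product]
  -- facts about C
  have hCmem : ∀ f ∈ C, (∃ v ∈ S, G.Inc f v) ∧ (∃ v ∈ Sᶜ, G.Inc f v) := by
    intro f hf; exact (G.mem_cut_iff S f).mp hf
  have hBcard : ∀ N ∈ B, (N ∩ C).card = 1 := by
    intro N hN
    have := ((mem_filter.mp hN).2).2.2
    rwa [cut_compl] at this
  have hAcard : ∀ M ∈ A, (M ∩ C).card = 1 := fun M hM => ((mem_filter.mp hM).2).2.2
  by_cases hv : ∃ v ∈ S, G.Inc e v
  · -- e has an endpoint in S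
    have hinner : ∀ M ∈ A,
        (∑ N ∈ B, if M ∩ C = N ∩ C then (if e ∈ M ∪ N then y M * t N else 0) else 0)
          = if e ∈ M then y M else 0 := by
      intro M hM
      have hM' : G.IsContractionPM S M := (mem_filter.mp hM).2
      by_cases he : e ∈ M
      · obtain ⟨f, hf⟩ := Finset.card_eq_one.mp (hAcard M hM)
        have hfC : f ∈ C := by
          have : f ∈ M ∩ C := hf ▸ mem_singleton_self f
          exact (mem_inter.mp this).2
        have hcond : ∀ N ∈ B, (M ∩ C = N ∩ C) ↔ f ∈ N := by
          intro N hN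
          constructor
          · intro h
            have : f ∈ N ∩ C := by rw [← h, hf]; exact mem_singleton_self f
            exact (mem_inter.mp this).1
          · intro hfN
            obtain ⟨g, hg⟩ := Finset.card_eq_one.mp (hBcard N hN)
            have : f ∈ N ∩ C := mem_inter.mpr ⟨hfN, hfC⟩
            rw [hg] at this
            rw [hf, hg, mem_singleton.mp this]
        have : (∑ N ∈ B, if M ∩ C = N ∩ C then (if e ∈ M ∪ N then y M * t N else 0) else 0)
            = ∑ N ∈ B, y M * (if f ∈ N then t N else 0) := by
          refine Finset.sum_congr rfl fun N hN => ?_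
          rw [if_congr (hcond N hN) rfl rfl]
          by_cases hfN : f ∈ N
          · simp [hfN, mem_union, he]
          · simp [hfN]
        rw [this, ← Finset.mul_sum, ht f (hCmem f hfC).2, mul_one, if_pos he]
      · rw [if_neg he]
        refine Finset.sum_eq_zero fun N hN => ?_
        have hN' : G.IsContractionPM Sᶜ N := (mem_filter.mp hN).2
        by_cases hcomp : M ∩ C = N ∩ C
        · rw [if_pos hcomp]
          have heMN : e ∉ M ∪ N := by
            intro hmem
            rcases mem_union.mp hmem with h | h
            · exact he h
            · -- e ∈ N and e has an endpoint in S, so e ∈ C, so e ∈ M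
              have heC : e ∈ C := (G.mem_cut_iff S e).mpr ⟨hv, hN'.1 e h⟩
              have : e ∈ N ∩ C := mem_inter.mpr ⟨h, heC⟩
              rw [← hcomp] at this
              exact he (mem_inter.mp this).1
          rw [if_neg heMN]
        · rw [if_neg hcomp]
    calc (∑ M ∈ A, ∑ N ∈ B,
          if M ∩ C = N ∩ C then (if e ∈ M ∪ N then y M * t N else 0) else 0)
        = ∑ M ∈ A, (if e ∈ M then y M else 0) := Finset.sum_congr rfl hinner
      _ = 1 := hy e hv
  · -- e has an endpoint only in Sᶜ
    have hv' : ∃ v ∈ Sᶜ, G.Inc e v := (G.endpoint_side S e).resolve_left hv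
    rw [Finset.sum_comm]
    have hinner : ∀ N ∈ B,
        (∑ M ∈ A, if M ∩ C = N ∩ C then (if e ∈ M ∪ N then y M * t N else 0) else 0)
          = if e ∈ N then t N else 0 := by
      intro N hN
      have hN' : G.IsContractionPM Sᶜ N := (mem_filter.mp hN).2
      have heM : ∀ M ∈ A, e ∉ M := by
        intro M hM hmem
        exact hv (((mem_filter.mp hM).2).1 e hmem)
      by_cases he : e ∈ N
      · obtain ⟨f, hf⟩ := Finset.card_eq_one.mp (hBcard N hN)
        have hfC : f ∈ C := by
          have : f ∈ N ∩ C := hf ▸ mem_singleton_self f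
          exact (mem_inter.mp this).2
        have hcond : ∀ M ∈ A, (M ∩ C = N ∩ C) ↔ f ∈ M := by
          intro M hM
          constructor
          · intro h
            have : f ∈ M ∩ C := by rw [h, hf]; exact mem_singleton_self f
            exact (mem_inter.mp this).1
          · intro hfM
            obtain ⟨g, hg⟩ := Finset.card_eq_one.mp (hAcard M hM)
            have : f ∈ M ∩ C := mem_inter.mpr ⟨hfM, hfC⟩
            rw [hg] at this
            rw [hf, hg, mem_singleton.mp this]
        have : (∑ M ∈ A, if M ∩ C = N ∩ C then (if e ∈ M ∪ N then y M * t N else 0) else 0)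
            = ∑ M ∈ A, (if f ∈ M then y M else 0) * t N := by
          refine Finset.sum_congr rfl fun M hM => ?_
          rw [if_congr (hcond M hM) rfl rfl]
          by_cases hfM : f ∈ M
          · simp [hfM, mem_union, he]
          · simp [hfM]
        rw [this, ← Finset.sum_mul, hy f (hCmem f hfC).1, one_mul, if_pos he]
      · rw [if_neg he]
        refine Finset.sum_eq_zero fun M hM => ?_
        by_cases hcomp : M ∩ C = N ∩ C
        · rw [if_pos hcomp]
          have heMN : e ∉ M ∪ N := by
            intro hmem
            rcases mem_union.mp hmem with h | h
            · exact heM M hM h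
            · exact he h
          rw [if_neg heMN]
        · rw [if_neg hcomp]
    calc (∑ N ∈ B, ∑ M ∈ A,
          if M ∩ C = N ∩ C then (if e ∈ M ∪ N then y M * t N else 0) else 0)
        = ∑ N ∈ B, (if e ∈ N then t N else 0) := Finset.sum_congr rfl hinner
      _ = 1 := ht e hv'
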